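/- Let d ≥ 1, let A be a symmetric d×d real matrix with operator norm ‖A‖ ≤ 1 and maximum column norm ‖A‖_{1→2} ≤ 1, and let η > 0, ε ∈ ℝ. Then for every integer T ≥ 1, ‖E[B_T]‖ ≤ (1 + 2η) ‖E[B_{T−1}]‖ + η² d² ‖diag(E[B_{T−1}])‖. -/

import Mathlib

open Matrix BigOperators

/-- The rank-one sample matrix `A_{(i,j)} = d² A_{ij} e_i e_jᵀ`. -/
noncomputable def sampleMat {d : ℕ} (A : Matrix (Fin d) (Fin d) ℝ) (p : Fin d × Fin d) :
    Matrix (Fin d) (Fin d) ℝ :=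
  ((d : ℝ) ^ 2 * A p.1 p.2) • Matrix.single p.1 p.2 1

/-- `P_T(ω) = (I + η A_{(i_T,j_T)}) ⋯ (I + η A_{(i_1,j_1)})`. -/
noncomputable def prodMat {d : ℕ} (A : Matrix (Fin d) (Fin d) ℝ) (η : ℝ) :
    (T : ℕ) → (Fin T → Fin d × Fin d) → Matrix (Fin d) (Fin d) ℝ
  | 0, _ => 1
  | (T + 1), ω => (1 + η • sampleMat A (ω (Fin.last T))) * prodMat A η T (fun t => ω t.castSucc)

/-- `E[B_T]`: the average of `P_T(ω)ᵀ ((1-ε)I - A) P_T(ω)` over all sequences `ω`. -/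
noncomputable def EB {d : ℕ} (A : Matrix (Fin d) (Fin d) ℝ) (η ε : ℝ) (T : ℕ) :
    Matrix (Fin d) (Fin d) ℝ :=
  (Fintype.card (Fin T → Fin d × Fin d) : ℝ)⁻¹ •
    ∑ ω : Fin T → Fin d × Fin d,
      (prodMat A η T ω)ᵀ * ((1 - ε) • (1 : Matrix (Fin d) (Fin d) ℝ) - A) * prodMat A η T ω

/-- The operator (spectral) norm of a matrix, as a map on Euclidean space. -/
noncomputable def opNorm {d : ℕ} (M : Matrix (Fin d) (Fin d) ℝ) : ℝ :=
  ‖Matrix.toEuclideanCLM (𝕜 := ℝ) M‖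

/-- The maximum Euclidean column norm `‖M‖_{1→2} = max_j ‖M e_j‖₂`. -/
noncomputable def colNorm {d : ℕ} (M : Matrix (Fin d) (Fin d) ℝ) : ℝ :=
  ⨆ j : Fin d, Real.sqrt (∑ i : Fin d, (M i j) ^ 2)

/-- `diag(M)`: the diagonal matrix with the same diagonal as `M`. -/
def diagPart {d : ℕ} (M : Matrix (Fin d) (Fin d) ℝ) : Matrix (Fin d) (Fin d) ℝ :=
  Matrix.diagonal M.diag

section Aux

variable {d : ℕ}

lemma transpose_std (i j : Fin d) (c : ℝ) :
    (Matrix.single i j c)ᵀ = Matrix.single j i c := by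
  ext a b
  simp [Matrix.single, and_comm]

lemma std_conj (B : Matrix (Fin d) (Fin d) ℝ) (i j : Fin d) :
    (Matrix.single i j (1:ℝ))ᵀ * B * Matrix.single i j 1
      = (B i i) • Matrix.single j j 1 := by
  rw [transpose_std]
  ext a b
  simp only [Matrix.mul_apply, Matrix.single, Matrix.of_apply, Matrix.smul_apply,
    ite_mul, mul_ite, one_mul, mul_one, zero_mul, mul_zero, smul_eq_mul, ite_and]
  by_cases hb : j = b <;> by_cases ha : j = a <;>
    simp_all [Finset.sum_ite_eq Finset.univ, eq_comm]

lemma sum_sampleMat (A : Matrix (Fin d) (Fin d) ℝ) :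
    ∑ p : Fin d × Fin d, sampleMat A p = ((d:ℝ)^2) • A := by
  ext a b
  rw [Matrix.sum_apply, Fintype.sum_prod_type]
  simp only [sampleMat, Matrix.smul_apply, Matrix.single, Matrix.of_apply, smul_eq_mul,
    mul_ite, mul_one, mul_zero, ite_and]
  rw [Finset.sum_eq_single a]
  · rw [Finset.sum_eq_single b] <;> simp +contextual [eq_comm]
  · intro i _ hi
    refine Finset.sum_eq_zero fun j _ => ?_
    simp only [ite_eq_right_iff]
    exact fun h _ => absurd h hi
  · simp

lemma quad_sum (A B : Matrix (Fin d) (Fin d) ℝ) :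
    ∑ p : Fin d × Fin d, (sampleMat A p)ᵀ * B * sampleMat A p
      = ((d:ℝ)^2) • Matrix.diagonal (fun j => (d:ℝ)^2 * ∑ i, (A i j)^2 * B i i) := by
  have h : ∀ p : Fin d × Fin d, (sampleMat A p)ᵀ * B * sampleMat A p
      = (((d:ℝ)^2 * A p.1 p.2)^2 * B p.1 p.1) • Matrix.single p.2 p.2 1 := by
    intro p
    simp only [sampleMat, Matrix.transpose_smul, Matrix.smul_mul, Matrix.mul_smul]
    rw [std_conj]
    rw [smul_smul, smul_smul]
    ring_nf
  simp only [h]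
  rw [Fintype.sum_prod_type_right]
  ext a b
  rw [Matrix.sum_apply]
  simp only [Matrix.sum_apply, Matrix.smul_apply, Matrix.single, Matrix.of_apply,
    smul_eq_mul, mul_ite, mul_one, mul_zero, ite_and, Matrix.diagonal]
  by_cases hab : a = b
  · subst hab
    rw [Finset.sum_eq_single a]
    · simp [Finset.mul_sum]
      congr 1
      ext i
      ring
    · intro j _ hj
      refine Finset.sum_eq_zero fun i _ => ?_
      simp [hj]
    · simp
  · rw [Finset.sum_eq_zero]
    · simp [Ne.symm hab, hab]
    · intro j _
      refine Finset.sum_eq_zero fun i _ => ?_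
      by_cases hja : j = a <;> simp [hja, hab]

lemma prod_peel (A : Matrix (Fin d) (Fin d) ℝ) (η : ℝ) :
    ∀ (T : ℕ) (ω : Fin (T+1) → Fin d × Fin d),
      prodMat A η (T+1) ω
        = prodMat A η T (fun t => ω t.succ) * (1 + η • sampleMat A (ω 0)) := by
  intro T
  induction T with
  | zero => intro ω; simp [prodMat, Fin.last]
  | succ T ih =>
    intro ω
    show (1 + η • sampleMat A (ω (Fin.last (T+1)))) * prodMat A η (T+1) (fun t => ω t.castSucc) = _
    rw [ih (fun t => ω t.castSucc)]
    show _ = (1 + η • sampleMat A ((fun t => ω t.succ) (Fin.last T))) *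
        prodMat A η T (fun t => (fun s => ω s.succ) t.castSucc) * (1 + η • sampleMat A (ω 0))
    simp only [Fin.succ_last, Fin.castSucc_zero, ← Fin.succ_castSucc]
    rw [mul_assoc]

lemma EB_succ (A : Matrix (Fin d) (Fin d) ℝ) (η ε : ℝ) (T : ℕ) :
    EB A η ε (T+1) = (((d:ℝ)^2)⁻¹) •
      ∑ p : Fin d × Fin d, (1 + η • sampleMat A p)ᵀ * EB A η ε T * (1 + η • sampleMat A p) := by
  unfold EB
  rw [← (Fin.consEquiv (fun _ : Fin (T+1) => Fin d × Fin d)).sum_comp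
    (fun ω => (prodMat A η (T+1) ω)ᵀ * ((1 - ε) • (1 : Matrix (Fin d) (Fin d) ℝ) - A) * prodMat A η (T+1) ω)]
  rw [Fintype.sum_prod_type]
  have key : ∀ (p : Fin d × Fin d) (ω' : Fin T → Fin d × Fin d),
      prodMat A η (T+1) (Fin.consEquiv _ (p, ω'))
        = prodMat A η T ω' * (1 + η • sampleMat A p) := by
    intro p ω'
    rw [prod_peel]
    simp [Fin.consEquiv]
  simp only [key]
  have expand : ∀ (p : Fin d × Fin d) (ω' : Fin T → Fin d × Fin d),
      (prodMat A η T ω' * (1 + η • sampleMat A p))ᵀ *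
          ((1 - ε) • (1 : Matrix (Fin d) (Fin d) ℝ) - A) *
          (prodMat A η T ω' * (1 + η • sampleMat A p))
        = (1 + η • sampleMat A p)ᵀ *
            ((prodMat A η T ω')ᵀ * ((1 - ε) • (1 : Matrix (Fin d) (Fin d) ℝ) - A) *
              prodMat A η T ω') * (1 + η • sampleMat A p) := by
    intro p ω'
    rw [Matrix.transpose_mul]
    simp only [mul_assoc]
  simp only [expand]
  have card_eq : (Fintype.card (Fin (T+1) → Fin d × Fin d) : ℝ)
      = (d:ℝ)^2 * (Fintype.card (Fin T → Fin d × Fin d) : ℝ) := by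
    simp [Fintype.card_fun, pow_succ, Fintype.card_prod]
    ring
  rw [card_eq, mul_inv]
  simp only [Matrix.mul_smul, Matrix.smul_mul, Finset.smul_sum, Finset.mul_sum,
    Finset.sum_mul, smul_smul]

lemma euclid_norm_symm (w : Fin d → ℝ) :
    ‖(WithLp.equiv 2 (Fin d → ℝ)).symm w‖ = Real.sqrt (∑ i, (w i)^2) := by
  rw [EuclideanSpace.norm_eq]
  congr 1
  refine Finset.sum_congr rfl fun i _ => ?_
  rw [WithLp.equiv_symm_apply, WithLp.ofLp_toLp, Real.norm_eq_abs, sq_abs]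

lemma toEuclideanCLM_piLp_equiv_symm_aux (M : Matrix (Fin d) (Fin d) ℝ) (x : Fin d → ℝ) :
    Matrix.toEuclideanCLM (𝕜 := ℝ) M ((WithLp.equiv 2 (Fin d → ℝ)).symm x)
      = (WithLp.equiv 2 (Fin d → ℝ)).symm (Matrix.toLin' M x) := rfl

lemma opNorm_diagonal_le (v : Fin d → ℝ) (c : ℝ) (hc : 0 ≤ c) (h : ∀ i, |v i| ≤ c) :
    opNorm (Matrix.diagonal v) ≤ c := by
  refine ContinuousLinearMap.opNorm_le_bound _ hc fun x => ?_
  have hx : x = (WithLp.equiv 2 (Fin d → ℝ)).symm (WithLp.equiv 2 (Fin d → ℝ) x) :=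
    (Equiv.symm_apply_apply _ _).symm
  set y := WithLp.equiv 2 (Fin d → ℝ) x with hy
  rw [hx, toEuclideanCLM_piLp_equiv_symm_aux, euclid_norm_symm, euclid_norm_symm]
  have hv : ∀ i, (Matrix.toLin' (Matrix.diagonal v) y) i = v i * y i := by
    intro i
    rw [Matrix.toLin'_apply, Matrix.mulVec_diagonal]
  calc Real.sqrt (∑ i, ((Matrix.toLin' (Matrix.diagonal v) y) i)^2)
      ≤ Real.sqrt (∑ i, c^2 * (y i)^2) := by
        apply Real.sqrt_le_sqrt
        refine Finset.sum_le_sum fun i _ => ?_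
        rw [hv, mul_pow]
        have : (v i)^2 ≤ c^2 := by
          rw [← sq_abs]
          exact pow_le_pow_left₀ (abs_nonneg _) (h i) 2
        exact mul_le_mul_of_nonneg_right this (sq_nonneg _)
    _ = c * Real.sqrt (∑ i, (y i)^2) := by
        rw [← Finset.mul_sum, Real.sqrt_mul (sq_nonneg c), Real.sqrt_sq hc]

lemma abs_le_opNorm_diagonal (v : Fin d → ℝ) (i : Fin d) :
    |v i| ≤ opNorm (Matrix.diagonal v) := by
  have h := (Matrix.toEuclideanCLM (𝕜 := ℝ) (Matrix.diagonal v)).le_opNorm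
    (EuclideanSpace.single i 1)
  rw [EuclideanSpace.norm_single, norm_one, mul_one] at h
  refine le_trans ?_ h
  rw [show EuclideanSpace.single i (1:ℝ) = (WithLp.equiv 2 (Fin d → ℝ)).symm (Pi.single i 1) from rfl,
    toEuclideanCLM_piLp_equiv_symm_aux, euclid_norm_symm]
  have : |v i| = Real.sqrt ((Matrix.toLin' (Matrix.diagonal v) (Pi.single i 1)) i ^ 2) := by
    rw [Matrix.toLin'_apply, Matrix.mulVec_diagonal, Pi.single_eq_same, mul_one,
      Real.sqrt_sq_eq_abs]
  rw [this]
  apply Real.sqrt_le_sqrt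
  exact Finset.single_le_sum
    (f := fun j => (Matrix.toLin' (Matrix.diagonal v) (Pi.single i 1)) j ^ 2)
    (fun j _ => sq_nonneg _) (Finset.mem_univ i)

end Aux

set_option synthInstance.maxHeartbeats 1000000
set_option maxHeartbeats 1000000

theorem stmt6 {d : ℕ} (hd : 1 ≤ d) (A : Matrix (Fin d) (Fin d) ℝ) (hsymm : A.IsSymm)
    (hAop : opNorm A ≤ 1) (hAcol : colNorm A ≤ 1) (η ε : ℝ) (hη : 0 < η)
    (T : ℕ) (hT : 1 ≤ T) :
    opNorm (EB A η ε T)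
      ≤ (1 + 2 * η) * opNorm (EB A η ε (T - 1))
        + η ^ 2 * (d : ℝ) ^ 2 * opNorm (diagPart (EB A η ε (T - 1))) := by
  obtain ⟨T', rfl⟩ : ∃ T', T = T' + 1 := ⟨T - 1, by omega⟩
  simp only [Nat.add_sub_cancel]
  set B := EB A η ε T' with hB
  set Dv : Fin d → ℝ := fun j => ∑ i, (A i j)^2 * B i i with hDv
  set Dmat := Matrix.diagonal Dv with hDmat
  have hd2 : ((d:ℝ)^2) ≠ 0 := by positivity
  -- main algebraic identity
  have main : EB A η ε (T'+1)
      = B + η • (A * B + B * A) + (η^2 * (d:ℝ)^2) • Dmat := by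
    rw [EB_succ, ← hB]
    have expand : ∀ p : Fin d × Fin d,
        (1 + η • sampleMat A p)ᵀ * B * (1 + η • sampleMat A p)
          = B + (η • ((sampleMat A p)ᵀ * B) + (η • (B * sampleMat A p)
            + (η^2) • ((sampleMat A p)ᵀ * B * sampleMat A p))) := by
      intro p
      rw [Matrix.transpose_add, Matrix.transpose_one, Matrix.transpose_smul]
      simp only [Matrix.add_mul, Matrix.mul_add, Matrix.one_mul, Matrix.mul_one,
        Matrix.smul_mul, Matrix.mul_smul, smul_add, smul_smul, ← sq]
      abel
    simp only [expand]
    rw [Finset.sum_add_distrib, Finset.sum_add_distrib, Finset.sum_add_distrib]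
    have hTsum : ∑ p : Fin d × Fin d, (sampleMat A p)ᵀ = ((d:ℝ)^2) • A := by
      rw [← Matrix.transpose_sum, sum_sampleMat, Matrix.transpose_smul, hsymm]
    have h1 : ∑ _p : Fin d × Fin d, B = ((d:ℝ)^2) • B := by
      rw [Finset.sum_const, Finset.card_univ, Fintype.card_prod, Fintype.card_fin,
        ← Nat.cast_smul_eq_nsmul ℝ]
      congr 1
      push_cast
      ring
    have h2 : ∑ p : Fin d × Fin d, η • ((sampleMat A p)ᵀ * B)
        = η • (((d:ℝ)^2) • (A * B)) := by
      rw [← Finset.smul_sum, ← Finset.sum_mul, hTsum, Matrix.smul_mul]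
    have h3 : ∑ p : Fin d × Fin d, η • (B * sampleMat A p)
        = η • (((d:ℝ)^2) • (B * A)) := by
      rw [← Finset.smul_sum, ← Finset.mul_sum, sum_sampleMat, Matrix.mul_smul]
    have h4 : ∑ p : Fin d × Fin d, (η^2) • ((sampleMat A p)ᵀ * B * sampleMat A p)
        = (η^2) • (((d:ℝ)^2) • (((d:ℝ)^2) • Dmat)) := by
      rw [← Finset.smul_sum, quad_sum]
      congr 2
      rw [hDmat]
      ext a b
      by_cases hab : a = b <;> simp [Matrix.diagonal, hab, hDv]
    rw [h1, h2, h3, h4]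
    match_scalars <;> field_simp <;> ring
  -- norm bounds
  have hm : (0:ℝ) ≤ opNorm (diagPart B) := norm_nonneg _
  have hBii : ∀ i, |B i i| ≤ opNorm (diagPart B) := fun i => abs_le_opNorm_diagonal B.diag i
  have hScol : ∀ j, ∑ i, (A i j)^2 ≤ 1 := by
    intro j
    have h0 : (0:ℝ) ≤ ∑ i, (A i j)^2 := Finset.sum_nonneg fun i _ => sq_nonneg _
    have hs : Real.sqrt (∑ i, (A i j)^2) ≤ 1 := by
      unfold colNorm at hAcol
      exact le_trans (le_ciSup (f := fun j => Real.sqrt (∑ i, (A i j)^2)) (Set.Finite.bddAbove (Set.finite_range _)) j) hAcol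
    calc ∑ i, (A i j)^2 = (Real.sqrt (∑ i, (A i j)^2))^2 := (Real.sq_sqrt h0).symm
      _ ≤ 1^2 := pow_le_pow_left₀ (Real.sqrt_nonneg _) hs 2
      _ = 1 := one_pow 2
  have hvj : ∀ j, |Dv j| ≤ opNorm (diagPart B) := by
    intro j
    calc |∑ i, (A i j)^2 * B i i| ≤ ∑ i, |(A i j)^2 * B i i| := Finset.abs_sum_le_sum_abs _ _
      _ = ∑ i, (A i j)^2 * |B i i| := by
          refine Finset.sum_congr rfl fun i _ => ?_
          rw [abs_mul, abs_of_nonneg (sq_nonneg _)]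
      _ ≤ ∑ i, (A i j)^2 * opNorm (diagPart B) :=
          Finset.sum_le_sum fun i _ => mul_le_mul_of_nonneg_left (hBii i) (sq_nonneg _)
      _ = (∑ i, (A i j)^2) * opNorm (diagPart B) := (Finset.sum_mul _ _ _).symm
      _ ≤ 1 * opNorm (diagPart B) := mul_le_mul_of_nonneg_right (hScol j) hm
      _ = opNorm (diagPart B) := one_mul _
  have hDnorm : opNorm Dmat ≤ opNorm (diagPart B) := opNorm_diagonal_le _ _ hm hvj
  have hc : (0:ℝ) ≤ η^2 * (d:ℝ)^2 := by positivity
  rw [main]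
  unfold opNorm at hAop hDnorm ⊢
  rw [map_add, map_add, _root_.map_smul, _root_.map_smul, map_add, _root_.map_mul, _root_.map_mul]
  set f := Matrix.toEuclideanCLM (𝕜 := ℝ) (n := Fin d)
  have a2 : ‖η • (f A * f B + f B * f A)‖ ≤ η * (2*‖f B‖) := by
    rw [norm_smul η (f A * f B + f B * f A), Real.norm_eq_abs, abs_of_pos hη]
    refine mul_le_mul_of_nonneg_left ?_ hη.le
    refine le_trans (norm_add_le _ _) ?_
    have b1 := le_trans (norm_mul_le (f A) (f B)) (mul_le_of_le_one_left (norm_nonneg _) hAop)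
    have b2 := le_trans (norm_mul_le (f B) (f A)) (mul_le_of_le_one_right (norm_nonneg _) hAop)
    linarith
  have a3 : ‖(η^2*(d:ℝ)^2) • f Dmat‖ ≤ (η^2*(d:ℝ)^2) * ‖f Dmat‖ := by
    rw [norm_smul (η^2*(d:ℝ)^2) (f Dmat), Real.norm_eq_abs, abs_of_nonneg hc]
  have a1 := norm_add_le (f B + η • (f A * f B + f B * f A)) ((η^2*(d:ℝ)^2) • f Dmat)
  have a0 := norm_add_le (f B) (η • (f A * f B + f B * f A))
  have a4 : (η^2*(d:ℝ)^2) * ‖f Dmat‖ ≤ (η^2*(d:ℝ)^2) * ‖f (diagPart B)‖ :=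
    mul_le_mul_of_nonneg_left hDnorm hc
  nlinarith [norm_nonneg (f B)]
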